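/- For every permutation w of {1,…,n}: raj(w) = max{ maj(v) : v ≤_R w } = max{ maj(u⁻¹) : u ≤_L w }, where the maxima are over permutations v below w in right weak order and u below w in left weak order, respectively. -/

import Mathlib

open scoped Classical

noncomputable section

namespace RajRegularity

variable {n : ℕ}

/-- Maximal length of an increasing subsequence of `w(i), …, w(n)` beginning with `w(i)`:
the largest cardinality of a set `s` of positions that contains `i`, consists of positions
`≥ i`, and on which `w` is strictly increasing. -/
def lisFrom (w : Equiv.Perm (Fin n)) (i : Fin n) : ℕ :=
  (Finset.univ.filter fun s : Finset (Fin n) =>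
      i ∈ s ∧ (∀ j ∈ s, i ≤ j) ∧ ∀ j ∈ s, ∀ k ∈ s, j < k → w j < w k).sup Finset.card

/-- `rajCode w i = (n − i + 1) −` (maximal length of an increasing subsequence of
`w(i), …, w(n)` beginning with `w(i)`); here positions are 0-based, so the number of
positions `≥ i` is `n - i`. -/
def rajCode (w : Equiv.Perm (Fin n)) (i : Fin n) : ℕ :=
  (n - (i : ℕ)) - lisFrom w i

/-- The Rajchgot index `raj w = Σᵢ rajCode w i`. -/
def raj (w : Equiv.Perm (Fin n)) : ℕ := ∑ i, rajCode w i

/-- The number of inversions of `w`: pairs of positions `i < j` with `w i > w j`. -/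
def invNum (w : Equiv.Perm (Fin n)) : ℕ :=
  (Finset.univ.filter fun p : Fin n × Fin n => p.1 < p.2 ∧ w p.2 < w p.1).card

/-- The `i`-th entry of the inv code: `ℓ_i(w) = #{ j : i < j, w j < w i }`. -/
def ellCode (w : Equiv.Perm (Fin n)) (i : Fin n) : ℕ :=
  (Finset.univ.filter fun j : Fin n => i < j ∧ w j < w i).card

/-- The set of descent positions of `w` (0-based position `j` with `w j > w (j+1)`). -/
def descents (w : Equiv.Perm (Fin n)) : Finset (Fin n) :=
  Finset.univ.filter fun j : Fin n =>
    if h : (j : ℕ) + 1 < n then w ⟨(j : ℕ) + 1, h⟩ < w j else False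

/-- The major index: the sum of the (1-based) descent positions of `w`. -/
def maj (w : Equiv.Perm (Fin n)) : ℕ := ∑ j ∈ descents w, ((j : ℕ) + 1)

/-- `mCode w i`: the number of descents of `w` at positions `≥ i`. -/
def mCode (w : Equiv.Perm (Fin n)) (i : Fin n) : ℕ :=
  ((descents w).filter fun j => i ≤ j).card

/-- `w` is dominant iff it avoids the pattern 132. -/
def Dominant (w : Equiv.Perm (Fin n)) : Prop :=
  ¬ ∃ i j k : Fin n, i < j ∧ j < k ∧ w i < w k ∧ w k < w j

/-- `w` is fireworks iff there are no positions `i < j` with `w j < w (j+1) < w i`. -/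
def Fireworks (w : Equiv.Perm (Fin n)) : Prop :=
  ¬ ∃ (i j : Fin n) (h : (j : ℕ) + 1 < n),
      i < j ∧ w j < w ⟨(j : ℕ) + 1, h⟩ ∧ w ⟨(j : ℕ) + 1, h⟩ < w i

/-- `w` is inverse fireworks iff `w⁻¹` is fireworks. -/
def InvFireworks (w : Equiv.Perm (Fin n)) : Prop := Fireworks w⁻¹

/-- `w` is a valley permutation: for some `a`, it is strictly decreasing on positions `≤ a`
and strictly increasing on positions `≥ a`. -/
def Valley (w : Equiv.Perm (Fin n)) : Prop :=
  ∃ a : ℕ, (∀ i j : Fin n, i < j → (j : ℕ) ≤ a → w j < w i) ∧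
    ∀ i j : Fin n, a ≤ (i : ℕ) → i < j → w i < w j

/-- `eps w i` is the (1-based) blob index `ε_i(w) = i + r_i(w)`. -/
def eps (w : Equiv.Perm (Fin n)) (i : Fin n) : ℕ := (i : ℕ) + 1 + rajCode w i

/-- The shape of `w`: `α_k(w) = #{ i : ε_i(w) = k }` (here `k : Fin n` stands for the
1-based index `k + 1`). -/
def shape (w : Equiv.Perm (Fin n)) : Fin n → ℕ := fun k =>
  (Finset.univ.filter fun i : Fin n => eps w i = (k : ℕ) + 1).card

/-- Dominance order on shapes: `α ⪰ β` iff every tail sum of `α` is at least the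
corresponding tail sum of `β`. -/
def Dominates (α β : Fin n → ℕ) : Prop :=
  ∀ m : Fin n,
    ∑ k ∈ Finset.univ.filter (fun k : Fin n => m ≤ k), β k ≤
      ∑ k ∈ Finset.univ.filter (fun k : Fin n => m ≤ k), α k

/-- Right weak order: `u ≤_R w` iff `w = u * v` length-additively. -/
def leR (u w : Equiv.Perm (Fin n)) : Prop :=
  ∃ v : Equiv.Perm (Fin n), w = u * v ∧ invNum w = invNum u + invNum v

/-- Left weak order: `u ≤_L w` iff `w = v * u` length-additively. -/
def leL (u w : Equiv.Perm (Fin n)) : Prop :=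
  ∃ v : Equiv.Perm (Fin n), w = v * u ∧ invNum w = invNum v + invNum u

/-- Two-sided weak order: the transitive closure of the union of left and right weak
orders (both are reflexive, so we may use the reflexive-transitive closure). -/
def leLR (u w : Equiv.Perm (Fin n)) : Prop :=
  Relation.ReflTransGen (fun a b : Equiv.Perm (Fin n) => leL a b ∨ leR a b) u w

/-- The maximum of the block of the set partition `π(w)` containing the value `v`;
the block of `v` is `{ v' : ε_{w⁻¹ v'}(w) = ε_{w⁻¹ v}(w) }`. -/
def blockMax (w : Equiv.Perm (Fin n)) (v : Fin n) : ℕ :=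
  ((Finset.univ.filter fun v' : Fin n => eps w (w⁻¹ v') = eps w (w⁻¹ v)).max'
      ⟨v, Finset.mem_filter.mpr ⟨Finset.mem_univ v, rfl⟩⟩).val

/-- The fireworks map `Φ`: the one-line word of `Φ w` lists the blocks of `π(w)` in
increasing order of their maxima, each block written in decreasing order.  Equivalently,
`Φ w` sorts the values by the key (max of block, value reversed), lexicographically. -/
def Phi (w : Equiv.Perm (Fin n)) : Equiv.Perm (Fin n) :=
  Tuple.sort fun v : Fin n => n * blockMax w v + (n - 1 - (v : ℕ))

/-- The inverse fireworks map `Φ_inv w = Φ(w⁻¹)⁻¹`. -/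
def PhiInv (w : Equiv.Perm (Fin n)) : Equiv.Perm (Fin n) := (Phi w⁻¹)⁻¹

/-- Partial sums of a sequence of block sizes. -/
def psum (a : ℕ → ℕ) (m : ℕ) : ℕ := ∑ j ∈ Finset.range m, a j

/-- The index of the block (interval `[psum a m, psum a (m+1))`) containing the value `v`. -/
def blockIdx (n : ℕ) (a : ℕ → ℕ) (v : Fin n) : ℕ :=
  ((Finset.range n).filter fun m => psum a (m + 1) ≤ (v : ℕ)).card

/-- The layered permutation with block sizes `a 0, a 1, …`: it reverses each of the
consecutive intervals `[psum a m, psum a (m+1))` of `{0, …, n-1}`.  Equivalently, its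
one-line word sorts the values by (block index, value reversed) lexicographically. -/
def layered (n : ℕ) (a : ℕ → ℕ) : Equiv.Perm (Fin n) :=
  Tuple.sort fun v : Fin n => n * blockIdx n a v + (n - 1 - (v : ℕ))

/-- The layered permutation `e_α` associated to a shape `α : Fin n → ℕ`. -/
def eOf (α : Fin n → ℕ) : Equiv.Perm (Fin n) :=
  layered n fun m => if h : m < n then α ⟨m, h⟩ else 0

/-! ### Auxiliary development -/

section Aux
open Finset Equiv

/-- `S` is an increasing chain for `w` starting at `i`. -/
def IsChain (w : Equiv.Perm (Fin n)) (i : Fin n) (S : Finset (Fin n)) : Prop :=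
  i ∈ S ∧ (∀ j ∈ S, i ≤ j) ∧ ∀ j ∈ S, ∀ k ∈ S, j < k → w j < w k

lemma IsChain.singleton (w : Equiv.Perm (Fin n)) (i : Fin n) : IsChain w i {i} := by
  refine ⟨mem_singleton_self i, ?_, ?_⟩ <;> intros <;> simp_all

lemma le_lisFrom {w : Equiv.Perm (Fin n)} {i : Fin n} {S : Finset (Fin n)}
    (h : IsChain w i S) : S.card ≤ lisFrom w i := by
  refine Finset.le_sup ?_
  exact mem_filter.2 ⟨mem_univ _, h.1, h.2.1, h.2.2⟩

lemma lisFrom_spec (w : Equiv.Perm (Fin n)) (i : Fin n) :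
    ∃ S : Finset (Fin n), IsChain w i S ∧ S.card = lisFrom w i := by
  obtain ⟨S, hS, h⟩ := Finset.exists_mem_eq_sup
    (Finset.univ.filter fun s : Finset (Fin n) =>
      i ∈ s ∧ (∀ j ∈ s, i ≤ j) ∧ ∀ j ∈ s, ∀ k ∈ s, j < k → w j < w k)
    ⟨{i}, mem_filter.2 ⟨mem_univ _, (IsChain.singleton w i).1, (IsChain.singleton w i).2.1,
      (IsChain.singleton w i).2.2⟩⟩ Finset.card
  have := mem_filter.1 hS
  exact ⟨S, ⟨this.2.1, this.2.2.1, this.2.2.2⟩, h.symm⟩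

lemma one_le_lisFrom (w : Equiv.Perm (Fin n)) (i : Fin n) : 1 ≤ lisFrom w i := by
  have := le_lisFrom (IsChain.singleton w i); simpa using this

lemma lisFrom_le (w : Equiv.Perm (Fin n)) (i : Fin n) : lisFrom w i ≤ n - (i : ℕ) := by
  obtain ⟨S, hS, hc⟩ := lisFrom_spec w i
  rw [← hc, ← Fin.card_Ici i]
  exact card_le_card fun x hx => mem_Ici.2 (hS.2.1 x hx)

lemma rajCode_add (w : Equiv.Perm (Fin n)) (i : Fin n) :
    rajCode w i + lisFrom w i = n - (i : ℕ) :=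
  Nat.sub_add_cancel (lisFrom_le w i)

lemma raj_add (w : Equiv.Perm (Fin n)) :
    raj w + ∑ i, lisFrom w i = ∑ i : Fin n, (n - (i : ℕ)) := by
  rw [raj, ← Finset.sum_add_distrib]
  exact Finset.sum_congr rfl fun i _ => rajCode_add w i

lemma raj_le_raj {w v : Equiv.Perm (Fin n)}
    (h : ∑ i, lisFrom w i ≤ ∑ i, lisFrom v i) : raj v ≤ raj w := by
  have h1 := raj_add w; have h2 := raj_add v; omega

lemma adj_lt {j j' : Fin n} (hadj : (j:ℕ) + 1 = (j':ℕ)) : j < j' := by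
  rw [Fin.lt_def]; omega

lemma swap_lt_iff {j j' : Fin n} (hadj : (j:ℕ) + 1 = (j':ℕ)) {a b : Fin n} (hab : a < b) :
    Equiv.swap j j' a < Equiv.swap j j' b ↔ ¬(a = j ∧ b = j') := by
  by_cases haj : a = j <;> by_cases hbj' : b = j'
  · rw [haj, hbj', Equiv.swap_apply_left, Equiv.swap_apply_right]
    simp only [and_self, not_true_eq_false, iff_false, not_lt]
    exact le_of_lt (by rw [Fin.lt_def]; omega)
  · have hbj : b ≠ j := fun h => by rw [haj] at hab; exact absurd (h ▸ hab) (lt_irrefl _)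
    rw [haj, Equiv.swap_apply_left, Equiv.swap_apply_of_ne_of_ne hbj hbj']
    have hbv : (b:ℕ) ≠ (j':ℕ) := by simpa [Fin.ext_iff] using hbj'
    have : j' < b := by rw [haj, Fin.lt_def] at hab; rw [Fin.lt_def]; omega
    simp [this, hbj']
  · have haj' : a ≠ j' := fun h => by rw [hbj'] at hab; exact absurd (h ▸ hab) (lt_irrefl _)
    rw [hbj', Equiv.swap_apply_right, Equiv.swap_apply_of_ne_of_ne haj haj']
    have hav : (a:ℕ) ≠ (j:ℕ) := by simpa [Fin.ext_iff] using haj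
    have : a < j := by rw [hbj', Fin.lt_def] at hab; rw [Fin.lt_def]; omega
    simp [haj, this]
  · by_cases haj' : a = j'
    · have hbj : b ≠ j := by
        intro h; rw [haj', h, Fin.lt_def] at hab; omega
      rw [haj', Equiv.swap_apply_right, Equiv.swap_apply_of_ne_of_ne hbj hbj']
      have : j < b := by rw [haj', Fin.lt_def] at hab; rw [Fin.lt_def]; omega
      simp [this, hbj']
    · by_cases hbj : b = j
      · rw [hbj, Equiv.swap_apply_left, Equiv.swap_apply_of_ne_of_ne haj haj']
        have : a < j' := by rw [hbj, Fin.lt_def] at hab; rw [Fin.lt_def]; omega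
        simp [this, haj]
      · rw [Equiv.swap_apply_of_ne_of_ne haj haj', Equiv.swap_apply_of_ne_of_ne hbj hbj']
        simp [haj, hab]

lemma chain_map_swap {j j' : Fin n} (hadj : (j:ℕ) + 1 = (j':ℕ)) {u : Equiv.Perm (Fin n)}
    {i : Fin n} {S : Finset (Fin n)}
    (hS : IsChain (u * Equiv.swap j j') i S) (hnb : ¬(j ∈ S ∧ j' ∈ S)) :
    IsChain u (Equiv.swap j j' i) (S.image (Equiv.swap j j')) ∧
      (S.image (Equiv.swap j j')).card = S.card := by
  set s := Equiv.swap j j' with hs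
  obtain ⟨hiS, hmin, hinc⟩ := hS
  have mono : ∀ p ∈ S, ∀ q ∈ S, p < q → s p < s q := by
    intro p hp q hq hpq
    rw [hs, swap_lt_iff hadj hpq]
    rintro ⟨rfl, rfl⟩; exact hnb ⟨hp, hq⟩
  have mono' : ∀ p ∈ S, ∀ q ∈ S, s p < s q → p < q := by
    intro p hp q hq h
    rcases lt_trichotomy p q with h' | rfl | h'
    · exact h'
    · exact absurd h (lt_irrefl _)
    · exact absurd (mono q hq p hp h') (lt_asymm h)
  refine ⟨⟨mem_image_of_mem _ hiS, ?_, ?_⟩, Finset.card_image_of_injOn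
    fun p hp q hq h => (Equiv.injective s) h⟩
  · rintro b hb
    obtain ⟨q, hq, rfl⟩ := mem_image.1 hb
    rcases eq_or_lt_of_le (hmin q hq) with rfl | h
    · exact le_refl _
    · exact le_of_lt (mono _ hiS _ hq h)
  · rintro b hb c hc hbc
    obtain ⟨p, hp, rfl⟩ := mem_image.1 hb
    obtain ⟨q, hq, rfl⟩ := mem_image.1 hc
    have hpq : p < q := mono' p hp q hq hbc
    have := hinc p hp q hq hpq
    simpa [Equiv.Perm.mul_apply] using this

lemma lis_swapA {j j' : Fin n} (hadj : (j:ℕ) + 1 = (j':ℕ)) {v : Equiv.Perm (Fin n)}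
    (hv : v j < v j') (i : Fin n) :
    lisFrom (v * Equiv.swap j j') i ≤ lisFrom v (Equiv.swap j j' i) := by
  obtain ⟨S, hS, hcard⟩ := lisFrom_spec (v * Equiv.swap j j') i
  have hnb : ¬(j ∈ S ∧ j' ∈ S) := by
    rintro ⟨hj, hj'⟩
    have := hS.2.2 j hj j' hj' (adj_lt hadj)
    simp only [Equiv.Perm.mul_apply, Equiv.swap_apply_left, Equiv.swap_apply_right] at this
    exact absurd hv (lt_asymm this)
  obtain ⟨hchain, hc⟩ := chain_map_swap hadj hS hnb
  calc lisFrom (v * Equiv.swap j j') i = S.card := hcard.symm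
    _ = (S.image (Equiv.swap j j')).card := hc.symm
    _ ≤ _ := le_lisFrom hchain

lemma lis_swapB {j j' : Fin n} (hadj : (j:ℕ) + 1 = (j':ℕ)) {w : Equiv.Perm (Fin n)}
    (hdesc : w j' < w j) (hlis : lisFrom w j + 1 ≤ lisFrom w j') (i : Fin n) :
    lisFrom (w * Equiv.swap j j') i ≤ lisFrom w (Equiv.swap j j' i) := by
  have hjj' : j < j' := adj_lt hadj
  obtain ⟨S, hS, hcard⟩ := lisFrom_spec (w * Equiv.swap j j') i
  rw [← hcard]
  by_cases hnb : j ∈ S ∧ j' ∈ S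
  swap
  · obtain ⟨hchain, hc⟩ := chain_map_swap hadj hS hnb
    rw [← hc]; exact le_lisFrom hchain
  obtain ⟨hjS, hj'S⟩ := hnb
  obtain ⟨hiS, hmin, hinc⟩ := hS
  have hij : i ≤ j := hmin j hjS
  set Q : Finset (Fin n) := S.filter (fun q => j' < q) with hQ
  have hQchain : IsChain w j (insert j Q) := by
    refine ⟨mem_insert_self _ _, ?_, ?_⟩
    · intro q hq
      rcases mem_insert.1 hq with rfl | hq
      · exact le_refl _
      · exact le_of_lt (lt_trans hjj' (mem_filter.1 hq).2)
    · intro p hp q hq hpq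
      rcases mem_insert.1 hp with hpj | hp
      · rcases mem_insert.1 hq with hqj | hq
        · rw [hpj, hqj] at hpq; exact absurd hpq (lt_irrefl _)
        · rw [hpj]
          obtain ⟨hqS, hq'⟩ := mem_filter.1 hq
          have := hinc j' hj'S q hqS hq'
          have hqj : q ≠ j := fun h => absurd (h ▸ hq') (by simp [lt_asymm hjj'])
          have hqj' : q ≠ j' := fun h => absurd (h ▸ hq') (lt_irrefl _)
          simpa [Equiv.Perm.mul_apply, Equiv.swap_apply_right,
            Equiv.swap_apply_of_ne_of_ne hqj hqj'] using this
      · rcases mem_insert.1 hq with hqj | hq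
        · rw [hqj] at hpq
          exact absurd (lt_trans hjj' (mem_filter.1 hp).2) (lt_asymm hpq)
        · obtain ⟨hpS, hp'⟩ := mem_filter.1 hp
          obtain ⟨hqS, hq'⟩ := mem_filter.1 hq
          have := hinc p hpS q hqS hpq
          have hpj : p ≠ j := fun h => absurd (h ▸ hp') (by simp [lt_asymm hjj'])
          have hpj' : p ≠ j' := fun h => absurd (h ▸ hp') (lt_irrefl _)
          have hqj : q ≠ j := fun h => absurd (h ▸ hq') (by simp [lt_asymm hjj'])
          have hqj' : q ≠ j' := fun h => absurd (h ▸ hq') (lt_irrefl _)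
          simpa [Equiv.Perm.mul_apply, Equiv.swap_apply_of_ne_of_ne hpj hpj',
            Equiv.swap_apply_of_ne_of_ne hqj hqj'] using this
  have hjQ : j ∉ Q := fun h => absurd (mem_filter.1 h).2 (lt_asymm hjj')
  have hQbound : Q.card + 1 ≤ lisFrom w j := by
    have := le_lisFrom hQchain
    rw [card_insert_of_notMem hjQ] at this; omega
  rcases eq_or_lt_of_le hij with heq | hij
  · -- i = j
    rw [heq]
    rw [heq] at hiS hmin
    have hSeq : S = insert j (insert j' Q) := by
      ext q
      simp only [mem_insert, hQ, mem_filter]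
      constructor
      · intro hq
        have h1 : j ≤ q := hmin q hq
        rcases eq_or_ne q j with rfl | h2
        · exact Or.inl rfl
        rcases eq_or_ne q j' with rfl | h3
        · exact Or.inr (Or.inl rfl)
        refine Or.inr (Or.inr ⟨hq, ?_⟩)
        rw [Fin.lt_def]
        rw [Fin.le_def] at h1
        have h2' : (q:ℕ) ≠ (j:ℕ) := by simpa [Fin.ext_iff] using h2
        have h3' : (q:ℕ) ≠ (j':ℕ) := by simpa [Fin.ext_iff] using h3
        omega
      · rintro (rfl | rfl | ⟨hq, _⟩) <;> first | exact hjS | exact hj'S | exact hq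
    have hj'Q : j' ∉ Q := fun h => absurd (mem_filter.1 h).2 (lt_irrefl _)
    have hjQ' : j ∉ insert j' Q := by
      simp only [mem_insert]
      rintro (rfl | h)
      · exact absurd hjj' (lt_irrefl _)
      · exact hjQ h
    have hScard : S.card = Q.card + 2 := by
      rw [hSeq, card_insert_of_notMem hjQ', card_insert_of_notMem hj'Q]
    rw [Equiv.swap_apply_left, hScard]
    omega
  · -- i < j
    set P : Finset (Fin n) := S.filter (fun q => q < j) with hP
    obtain ⟨C, hC, hCc⟩ := lisFrom_spec w j'
    have hdisj : Disjoint P C := by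
      rw [Finset.disjoint_left]
      intro x hx hxC
      have h1 : x < j := (mem_filter.1 hx).2
      have h2 : j' ≤ x := hC.2.1 x hxC
      exact absurd (lt_trans (lt_of_le_of_lt h2 h1) hjj') (lt_irrefl _)
    have hTchain : IsChain w i (P ∪ C) := by
      refine ⟨mem_union_left _ (mem_filter.2 ⟨hiS, hij⟩), ?_, ?_⟩
      · intro q hq
        rcases mem_union.1 hq with hq | hq
        · exact hmin q (mem_filter.1 hq).1
        · exact le_of_lt (lt_of_lt_of_le (lt_trans hij hjj') (hC.2.1 q hq))
      · intro p hp q hq hpq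
        rcases mem_union.1 hp with hp | hp <;> rcases mem_union.1 hq with hq | hq
        · obtain ⟨hpS, hp'⟩ := mem_filter.1 hp
          obtain ⟨hqS, hq'⟩ := mem_filter.1 hq
          have := hinc p hpS q hqS hpq
          have hpj : p ≠ j := fun h => absurd (h ▸ hp') (lt_irrefl _)
          have hpj' : p ≠ j' := fun h => absurd (lt_trans hjj' (h ▸ hp')) (lt_irrefl _)
          have hqj : q ≠ j := fun h => absurd (h ▸ hq') (lt_irrefl _)
          have hqj' : q ≠ j' := fun h => absurd (lt_trans hjj' (h ▸ hq')) (lt_irrefl _)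
          simpa [Equiv.Perm.mul_apply, Equiv.swap_apply_of_ne_of_ne hpj hpj',
            Equiv.swap_apply_of_ne_of_ne hqj hqj'] using this
        · obtain ⟨hpS, hp'⟩ := mem_filter.1 hp
          have h1 : w p < w j' := by
            have := hinc p hpS j hjS hp'
            have hpj : p ≠ j := fun h => absurd (h ▸ hp') (lt_irrefl _)
            have hpj' : p ≠ j' := fun h => absurd (lt_trans hjj' (h ▸ hp')) (lt_irrefl _)
            simpa [Equiv.Perm.mul_apply, Equiv.swap_apply_left,
              Equiv.swap_apply_of_ne_of_ne hpj hpj'] using this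
          rcases eq_or_lt_of_le (hC.2.1 q hq) with rfl | h2
          · exact h1
          · exact lt_trans h1 (hC.2.2 j' hC.1 q hq h2)
        · have h1 : q < j := (mem_filter.1 hq).2
          have h2 : j' ≤ p := hC.2.1 p hp
          exact absurd (lt_trans (lt_of_le_of_lt h2 (lt_trans hpq h1)) hjj') (lt_irrefl _)
        · exact hC.2.2 p hp q hq hpq
    have hScard : S.card = P.card + Q.card + 2 := by
      have hj'P : j' ∉ insert j (P ∪ Q) := by
        simp only [mem_insert, mem_union, hP, hQ, mem_filter]
        rintro (rfl | ⟨_, h⟩ | ⟨_, h⟩)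
        · exact absurd hjj' (lt_irrefl _)
        · exact absurd (lt_trans hjj' h) (lt_irrefl _)
        · exact absurd h (lt_irrefl _)
      have hjPQ : j ∉ P ∪ Q := by
        simp only [mem_union, hP, hQ, mem_filter]
        rintro (⟨_, h⟩ | ⟨_, h⟩)
        · exact absurd h (lt_irrefl _)
        · exact absurd h (lt_asymm hjj')
      have hdisjPQ : Disjoint P Q := by
        rw [Finset.disjoint_left]
        intro x hx hxQ
        exact absurd (lt_trans hjj' (lt_trans (mem_filter.1 hxQ).2 (mem_filter.1 hx).2))
          (lt_irrefl _)
      have hSeq : S = insert j' (insert j (P ∪ Q)) := by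
        ext q
        simp only [mem_insert, mem_union, hP, hQ, mem_filter]
        constructor
        · intro hq
          rcases eq_or_ne q j' with rfl | h3
          · exact Or.inl rfl
          rcases eq_or_ne q j with rfl | h2
          · exact Or.inr (Or.inl rfl)
          have h2' : (q:ℕ) ≠ (j:ℕ) := by simpa [Fin.ext_iff] using h2
          have h3' : (q:ℕ) ≠ (j':ℕ) := by simpa [Fin.ext_iff] using h3
          rcases lt_or_ge (q:ℕ) (j:ℕ) with h | h
          · exact Or.inr (Or.inr (Or.inl ⟨hq, by rwa [Fin.lt_def]⟩))
          · refine Or.inr (Or.inr (Or.inr ⟨hq, ?_⟩))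
            rw [Fin.lt_def]; omega
        · rintro (rfl | rfl | ⟨hq, _⟩ | ⟨hq, _⟩) <;>
            first | exact hj'S | exact hjS | exact hq
      rw [hSeq, card_insert_of_notMem hj'P, card_insert_of_notMem hjPQ,
        card_union_of_disjoint hdisjPQ]
    have hsi : Equiv.swap j j' i = i := by
      refine Equiv.swap_apply_of_ne_of_ne (fun h => absurd (h ▸ hij) (lt_irrefl _))
        (fun h => absurd (lt_trans hjj' (h ▸ hij)) (lt_irrefl _))
    have hT := le_lisFrom hTchain
    rw [card_union_of_disjoint hdisj, hCc] at hT
    rw [hsi, hScard]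
    omega

end Aux

section InvAux
open Finset Equiv

lemma invNum_one : invNum (1 : Equiv.Perm (Fin n)) = 0 := by
  rw [invNum, Finset.card_eq_zero, Finset.filter_eq_empty_iff]
  rintro ⟨p, q⟩ _ ⟨h1, h2⟩
  exact absurd h1 (lt_asymm h2)

lemma invNum_inv (u : Equiv.Perm (Fin n)) : invNum u⁻¹ = invNum u := by
  rw [invNum, invNum]
  refine Finset.card_bij' (fun pq _ => (u⁻¹ pq.2, u⁻¹ pq.1)) (fun pq _ => (u pq.2, u pq.1))
    ?_ ?_ ?_ ?_
  · rintro ⟨p, q⟩ h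
    obtain ⟨-, h1, h2⟩ := Finset.mem_filter.1 h
    refine Finset.mem_filter.2 ⟨Finset.mem_univ _, h2, ?_⟩
    simpa using h1
  · rintro ⟨p, q⟩ h
    obtain ⟨-, h1, h2⟩ := Finset.mem_filter.1 h
    refine Finset.mem_filter.2 ⟨Finset.mem_univ _, h2, ?_⟩
    simpa using h1
  · rintro ⟨p, q⟩ _; simp
  · rintro ⟨p, q⟩ _; simp

lemma invNum_swap_mul_asc {j j' : Fin n} (hadj : (j:ℕ) + 1 = (j':ℕ))
    {u : Equiv.Perm (Fin n)} (h : u⁻¹ j < u⁻¹ j') :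
    invNum (Equiv.swap j j' * u) = invNum u + 1 := by
  have key : (Finset.univ.filter fun p : Fin n × Fin n =>
      p.1 < p.2 ∧ (Equiv.swap j j' * u) p.2 < (Equiv.swap j j' * u) p.1) =
      insert (u⁻¹ j, u⁻¹ j')
        (Finset.univ.filter fun p : Fin n × Fin n => p.1 < p.2 ∧ u p.2 < u p.1) := by
    ext ⟨p, q⟩
    rw [Finset.mem_filter]
    simp only [Finset.mem_filter, Finset.mem_univ, true_and, Finset.mem_insert,
      Prod.mk.injEq, Equiv.Perm.mul_apply]
    constructor
    · rintro ⟨hpq, hinv⟩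
      have hne : u p ≠ u q := fun hh => absurd (u.injective hh ▸ hpq) (lt_irrefl _)
      rcases lt_or_gt_of_ne hne with hlt | hgt
      · left
        have hnot : ¬ (Equiv.swap j j' (u p) < Equiv.swap j j' (u q)) :=
          fun hc => absurd hinv (lt_asymm hc)
        rw [swap_lt_iff hadj hlt, not_not] at hnot
        obtain ⟨hp, hq⟩ := hnot
        constructor
        · rw [← hp]; simp
        · rw [← hq]; simp
      · right
        exact ⟨hpq, hgt⟩
    · rintro (⟨rfl, rfl⟩ | ⟨hpq, hinv⟩)
      · refine ⟨h, ?_⟩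
        simp only [Equiv.Perm.coe_inv, Equiv.apply_symm_apply]
        rw [Equiv.swap_apply_left, Equiv.swap_apply_right]
        exact adj_lt hadj
      · refine ⟨hpq, ?_⟩
        rw [swap_lt_iff hadj hinv]
        rintro ⟨hq, hp⟩
        have hq' : q = u⁻¹ j := by rw [← hq]; simp
        have hp' : p = u⁻¹ j' := by rw [← hp]; simp
        rw [hq', hp'] at hpq
        exact absurd h (lt_asymm hpq)
  rw [invNum, key, Finset.card_insert_of_notMem, invNum]
  rintro hmem
  obtain ⟨-, -, h2⟩ := Finset.mem_filter.1 hmem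
  rw [Equiv.Perm.coe_inv, Equiv.apply_symm_apply, Equiv.apply_symm_apply] at h2
  exact absurd (adj_lt hadj) (lt_asymm h2)

lemma invNum_swap_mul_desc {j j' : Fin n} (hadj : (j:ℕ) + 1 = (j':ℕ))
    {u : Equiv.Perm (Fin n)} (h : u⁻¹ j' < u⁻¹ j) :
    invNum u = invNum (Equiv.swap j j' * u) + 1 := by
  have h2 : (Equiv.swap j j' * u)⁻¹ j < (Equiv.swap j j' * u)⁻¹ j' := by
    rw [mul_inv_rev, Equiv.swap_inv]
    simpa [Equiv.Perm.mul_apply] using h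
  have := invNum_swap_mul_asc hadj h2
  rwa [← mul_assoc, Equiv.swap_mul_self, one_mul] at this

lemma invNum_mul_swap_asc {j j' : Fin n} (hadj : (j:ℕ) + 1 = (j':ℕ))
    {v : Equiv.Perm (Fin n)} (h : v j < v j') :
    invNum (v * Equiv.swap j j') = invNum v + 1 := by
  rw [← invNum_inv (v * Equiv.swap j j'), mul_inv_rev, Equiv.swap_inv,
    invNum_swap_mul_asc hadj (by simpa using h), invNum_inv]

lemma invNum_mul_swap_desc {j j' : Fin n} (hadj : (j:ℕ) + 1 = (j':ℕ))
    {v : Equiv.Perm (Fin n)} (h : v j' < v j) :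
    invNum v = invNum (v * Equiv.swap j j') + 1 := by
  rw [← invNum_inv (v * Equiv.swap j j'), mul_inv_rev, Equiv.swap_inv,
    ← invNum_swap_mul_desc hadj (by simpa using h), invNum_inv]

lemma invNum_swap {j j' : Fin n} (hadj : (j:ℕ) + 1 = (j':ℕ)) :
    invNum (Equiv.swap j j' : Equiv.Perm (Fin n)) = 1 := by
  have := invNum_mul_swap_asc hadj (v := 1) (by simpa using adj_lt hadj)
  rwa [one_mul, invNum_one, zero_add] at this

lemma invNum_mul_le (u v : Equiv.Perm (Fin n)) :
    invNum (u * v) ≤ invNum u + invNum v := by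
  classical
  rw [invNum, ← Finset.card_filter_add_card_filter_not
    (p := fun pq : Fin n × Fin n => v pq.2 < v pq.1)]
  have h1 : ((Finset.univ.filter fun pq : Fin n × Fin n =>
      pq.1 < pq.2 ∧ (u * v) pq.2 < (u * v) pq.1).filter
      fun pq => v pq.2 < v pq.1).card ≤ invNum v := by
    apply Finset.card_le_card
    intro pq hpq
    obtain ⟨h, h2⟩ := Finset.mem_filter.1 hpq
    obtain ⟨-, h3, -⟩ := Finset.mem_filter.1 h
    exact Finset.mem_filter.2 ⟨Finset.mem_univ _, h3, h2⟩
  have h2 : ((Finset.univ.filter fun pq : Fin n × Fin n =>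
      pq.1 < pq.2 ∧ (u * v) pq.2 < (u * v) pq.1).filter
      fun pq => ¬ v pq.2 < v pq.1).card ≤ invNum u := by
    apply Finset.card_le_card_of_injOn (fun pq => (v pq.1, v pq.2))
    · intro pq hpq
      obtain ⟨h, h2⟩ := Finset.mem_filter.1 hpq
      obtain ⟨-, h3, h4⟩ := Finset.mem_filter.1 h
      have hne : v pq.1 ≠ v pq.2 := fun hh =>
        absurd (v.injective hh ▸ h3) (lt_irrefl _)
      refine Finset.mem_filter.2 ⟨Finset.mem_univ _, ?_, by simpa using h4⟩
      rcases lt_or_gt_of_ne hne with h | h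
      · exact h
      · exact absurd h h2
    · intro a _ b _ hab
      have h1 : v a.1 = v b.1 := congrArg Prod.fst hab
      have h2 : v a.2 = v b.2 := congrArg Prod.snd hab
      exact Prod.ext (v.injective h1) (v.injective h2)
  omega

lemma strictMono_eq_id {g : Fin n → Fin n} (hg : Function.Bijective g)
    (hmono : StrictMono g) : ∀ i, g i = i := by
  have hle : ∀ k (hk : k < n), k ≤ (g ⟨k, hk⟩ : ℕ) := by
    intro k
    induction k with
    | zero => intro _; exact Nat.zero_le _
    | succ m ih =>
      intro hk
      have hm : m < n := lt_trans (Nat.lt_succ_self m) hk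
      have := hmono (show (⟨m, hm⟩ : Fin n) < ⟨m + 1, hk⟩ by
        rw [Fin.lt_def]; exact Nat.lt_succ_self m)
      rw [Fin.lt_def] at this
      have := ih hm
      omega
  have hinv : ∀ i : Fin n, (i:ℕ) ≤ g i := fun i => hle i i.isLt
  have hsum : ∑ x : Fin n, ((g x : ℕ)) = ∑ x : Fin n, (x : ℕ) :=
    Equiv.sum_comp (Equiv.ofBijective g hg) (fun x : Fin n => (x : ℕ))
  have hpt := (Finset.sum_eq_sum_iff_of_le (fun x _ => hinv x)).1 hsum.symm
  intro i
  exact Fin.ext ((hpt i (Finset.mem_univ i)).symm)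

lemma exists_left_descent {u : Equiv.Perm (Fin n)} (hu : u ≠ 1) :
    ∃ j j' : Fin n, (j:ℕ) + 1 = (j':ℕ) ∧ u⁻¹ j' < u⁻¹ j := by
  by_contra hcon
  push_neg at hcon
  apply hu
  have hmono : StrictMono (⇑u⁻¹) := by
    cases n with
    | zero => intro a; exact a.elim0
    | succ m =>
      rw [Fin.strictMono_iff_lt_succ]
      intro i
      have hadj : ((i.castSucc : Fin (m+1)):ℕ) + 1 = ((i.succ : Fin (m+1)):ℕ) := by simp
      have h1 := hcon i.castSucc i.succ hadj
      have h2 : u⁻¹ i.castSucc ≠ u⁻¹ i.succ := by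
        intro h
        have := u⁻¹.injective h
        have : (i.castSucc : ℕ) = (i.succ : ℕ) := congrArg Fin.val this
        omega
      exact lt_of_le_of_ne h1 h2
  have hid := strictMono_eq_id u⁻¹.bijective hmono
  have : u⁻¹ = 1 := Equiv.ext fun x => hid x
  rw [← inv_inv u, this]
  rfl

lemma invNum_pos_of_ne_one {u : Equiv.Perm (Fin n)} (hu : u ≠ 1) : 0 < invNum u := by
  obtain ⟨j, j', hadj, hdesc⟩ := exists_left_descent hu
  rw [invNum, Finset.card_pos]
  refine ⟨(u⁻¹ j', u⁻¹ j), Finset.mem_filter.2 ⟨Finset.mem_univ _, hdesc, ?_⟩⟩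
  simp only [Equiv.Perm.coe_inv, Equiv.apply_symm_apply]
  exact adj_lt hadj

lemma leR_refl (w : Equiv.Perm (Fin n)) : leR w w :=
  ⟨1, (mul_one w).symm, by simp [invNum_one]⟩

lemma leR_trans {a b c : Equiv.Perm (Fin n)} (h1 : leR a b) (h2 : leR b c) : leR a c := by
  obtain ⟨x, rfl, hx⟩ := h1
  obtain ⟨y, rfl, hy⟩ := h2
  refine ⟨x * y, by rw [mul_assoc], ?_⟩
  have hs1 := invNum_mul_le x y
  have hs2 := invNum_mul_le a (x * y)
  rw [← mul_assoc] at hs2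
  omega

end InvAux

section MajAux
open Finset Equiv

lemma mem_descents {w : Equiv.Perm (Fin n)} {q : Fin n} :
    q ∈ descents w ↔ ∃ h : (q:ℕ) + 1 < n, w ⟨(q:ℕ) + 1, h⟩ < w q := by
  rw [descents, Finset.mem_filter]
  simp only [Finset.mem_univ, true_and]
  by_cases h : (q:ℕ) + 1 < n
  · rw [dif_pos h]
    exact ⟨fun hh => ⟨h, hh⟩, fun ⟨_, hh⟩ => hh⟩
  · rw [dif_neg h]
    exact ⟨fun hh => hh.elim, fun ⟨hh, _⟩ => absurd hh h⟩

lemma maj_eq_sum (w : Equiv.Perm (Fin n)) : maj w = ∑ i, mCode w i := by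
  rw [maj]
  have h1 : ∀ q : Fin n, (q:ℕ) + 1 = (Finset.univ.filter fun i : Fin n => i ≤ q).card := by
    intro q
    rw [show (Finset.univ.filter fun i : Fin n => i ≤ q) = Finset.Iic q by ext x; simp,
      Fin.card_Iic]
  calc ∑ q ∈ descents w, ((q:ℕ) + 1)
      = ∑ q ∈ descents w, ∑ i : Fin n, (if i ≤ q then 1 else 0) := by
        refine Finset.sum_congr rfl fun q _ => ?_
        rw [h1 q, Finset.card_filter]
    _ = ∑ i : Fin n, ∑ q ∈ descents w, (if i ≤ q then 1 else 0) := Finset.sum_comm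
    _ = ∑ i, mCode w i := by
        refine Finset.sum_congr rfl fun i _ => ?_
        rw [mCode, Finset.card_filter]

lemma descRun (w : Equiv.Perm (Fin n)) :
    ∀ (d : ℕ) (p q : Fin n), (q:ℕ) = (p:ℕ) + d →
      (∀ r : Fin n, p ≤ r → r < q → r ∈ descents w) → 0 < d → w q < w p := by
  intro d
  induction d with
  | zero => intro p q h _ hd; omega
  | succ m ih =>
    intro p q hq hall _
    have hr : (p:ℕ) + m < n := by have := q.isLt; omega
    set r : Fin n := ⟨(p:ℕ) + m, hr⟩ with hrdef
    have hpr : p ≤ r := by rw [Fin.le_def]; simp [hrdef]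
    have hrq : r < q := by rw [Fin.lt_def]; simp [hrdef]; omega
    have hrD : r ∈ descents w := hall r hpr hrq
    obtain ⟨hlt, hdesc⟩ := mem_descents.1 hrD
    have hq' : (⟨(r:ℕ) + 1, hlt⟩ : Fin n) = q := by
      apply Fin.ext; simp [hrdef]; omega
    rw [hq'] at hdesc
    rcases Nat.eq_zero_or_pos m with rfl | hm
    · have : r = p := by apply Fin.ext; simp [hrdef]
      rwa [this] at hdesc
    · exact lt_trans hdesc (ih p r (by simp [hrdef])
        (fun s hs1 hs2 => hall s hs1 (lt_trans hs2 hrq)) hm)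

lemma mCode_add_lisFrom_le (w : Equiv.Perm (Fin n)) (i : Fin n) :
    mCode w i + lisFrom w i ≤ n - (i:ℕ) := by
  classical
  have hn : 0 < n := i.pos
  set N : Finset (Fin n) := Finset.univ.filter (fun q => i ≤ q ∧ q ∉ descents w) with hN
  have hsplit : mCode w i + N.card = n - (i:ℕ) := by
    have e1 : mCode w i = (Finset.univ.filter fun q : Fin n => i ≤ q ∧ q ∈ descents w).card := by
      rw [mCode]; congr 1; ext q
      simp only [Finset.mem_filter, Finset.mem_univ, true_and]
      tauto
    have e2 := Finset.card_filter_add_card_filter_not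
      (s := Finset.univ.filter fun q : Fin n => i ≤ q) (p := fun q => q ∈ descents w)
    rw [Finset.filter_filter, Finset.filter_filter] at e2
    have e3 : (Finset.univ.filter fun q : Fin n => i ≤ q).card = n - (i:ℕ) := by
      rw [show (Finset.univ.filter fun q : Fin n => i ≤ q) = Finset.Ici i by ext x; simp,
        Fin.card_Ici]
    rw [e1, hN]
    rw [← e3, ← e2]
  -- the "first non-descent at or after p" map
  have hLmem : ∀ p : Fin n, (⟨n - 1, by omega⟩ : Fin n) ∈
      Finset.univ.filter (fun q : Fin n => p ≤ q ∧ q ∉ descents w) := by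
    intro p
    refine Finset.mem_filter.2 ⟨Finset.mem_univ _, ?_, ?_⟩
    · rw [Fin.le_def]; have := p.isLt; simp; omega
    · intro hmem
      obtain ⟨h, -⟩ := mem_descents.1 hmem
      simp at h; omega
  have hne : ∀ p : Fin n,
      (Finset.univ.filter (fun q : Fin n => p ≤ q ∧ q ∉ descents w)).Nonempty :=
    fun p => ⟨_, hLmem p⟩
  set ρ : Fin n → Fin n := fun p =>
    (Finset.univ.filter (fun q : Fin n => p ≤ q ∧ q ∉ descents w)).min' (hne p) with hρ
  have hρmem : ∀ p, p ≤ ρ p ∧ ρ p ∉ descents w := by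
    intro p
    have := Finset.min'_mem _ (hne p)
    have := Finset.mem_filter.1 this
    exact this.2
  have hρmin : ∀ p r, p ≤ r → r < ρ p → r ∈ descents w := by
    intro p r h1 h2
    by_contra h3
    have : ρ p ≤ r := Finset.min'_le _ _ (Finset.mem_filter.2 ⟨Finset.mem_univ _, h1, h3⟩)
    exact absurd (lt_of_le_of_lt this h2) (lt_irrefl _)
  have hlis : lisFrom w i ≤ N.card := by
    obtain ⟨S, hS, hc⟩ := lisFrom_spec w i
    rw [← hc]
    apply Finset.card_le_card_of_injOn ρ
    · intro p hp
      rw [hN]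
      exact Finset.mem_filter.2 ⟨Finset.mem_univ _,
        le_trans (hS.2.1 p hp) (hρmem p).1, (hρmem p).2⟩
    · intro p hp p' hp' heq
      by_contra hne'
      rcases lt_or_gt_of_ne hne' with hlt | hgt
      · -- p < p', ρ p = ρ p'
        have h1 : p' ≤ ρ p := heq ▸ (hρmem p').1
        have hd : ∀ r : Fin n, p ≤ r → r < p' → r ∈ descents w := by
          intro r hr1 hr2
          exact hρmin p r hr1 (lt_of_lt_of_le hr2 h1)
        have hlt' := Fin.lt_def.1 hlt
        have := descRun w ((p':ℕ) - (p:ℕ)) p p' (by omega) hd (by omega)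
        exact absurd (hS.2.2 p hp p' hp' hlt) (lt_asymm this)
      · have h1 : p ≤ ρ p' := heq ▸ (hρmem p).1
        have hd : ∀ r : Fin n, p' ≤ r → r < p → r ∈ descents w := by
          intro r hr1 hr2
          exact hρmin p' r hr1 (lt_of_lt_of_le hr2 h1)
        have hgt' := Fin.lt_def.1 hgt
        have := descRun w ((p:ℕ) - (p':ℕ)) p' p (by omega) hd (by omega)
        exact absurd (hS.2.2 p' hp' p hp hgt) (lt_asymm this)
  omega

lemma maj_le_raj (w : Equiv.Perm (Fin n)) : maj w ≤ raj w := by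
  rw [maj_eq_sum, raj]
  refine Finset.sum_le_sum fun i _ => ?_
  have h1 := mCode_add_lisFrom_le w i
  have h2 := rajCode_add w i
  omega

lemma nogood_key {w : Equiv.Perm (Fin n)}
    (H : ∀ j j' : Fin n, (j:ℕ) + 1 = (j':ℕ) → w j' < w j → lisFrom w j' ≤ lisFrom w j) :
    ∀ i : Fin n, (n:ℕ) - (i:ℕ) ≤ mCode w i + lisFrom w i := by
  cases n with
  | zero => exact fun i => i.elim0
  | succ m =>
    intro i
    induction i using Fin.reverseInduction with
    | last =>
      have h1 := one_le_lisFrom w (Fin.last m)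
      have h2 : ((Fin.last m : Fin (m+1)) : ℕ) = m := rfl
      omega
    | cast i ih =>
      have hadj : ((i.castSucc : Fin (m+1)):ℕ) + 1 = ((i.succ : Fin (m+1)):ℕ) := by simp
      have hvals : ((i.castSucc : Fin (m+1)):ℕ) = (i:ℕ) ∧ ((i.succ : Fin (m+1)):ℕ) = (i:ℕ) + 1 := by
        simp
      have hmcode : mCode w i.castSucc =
          mCode w i.succ + (if i.castSucc ∈ descents w then 1 else 0) := by
        rw [mCode, mCode]
        have hset : (descents w).filter (fun q => i.castSucc ≤ q) =
            ((descents w).filter (fun q => i.succ ≤ q)) ∪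
              ((descents w).filter (fun q => q = i.castSucc)) := by
          ext q
          simp only [Finset.mem_filter, Finset.mem_union]
          constructor
          · rintro ⟨hq, hle⟩
            rw [Fin.le_def] at hle
            rcases eq_or_ne q i.castSucc with rfl | hne
            · exact Or.inr ⟨hq, rfl⟩
            · refine Or.inl ⟨hq, ?_⟩
              rw [Fin.le_def]
              have : (q:ℕ) ≠ ((i.castSucc : Fin (m+1)):ℕ) := by
                simpa [Fin.ext_iff] using hne
              omega
          · rintro (⟨hq, hle⟩ | ⟨hq, rfl⟩)
            · refine ⟨hq, ?_⟩
              rw [Fin.le_def] at hle ⊢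
              omega
            · exact ⟨hq, le_refl _⟩
        rw [hset, Finset.card_union_of_disjoint, Finset.filter_eq']
        · split
          · rw [Finset.card_singleton]
          · rw [Finset.card_empty]
        · rw [Finset.disjoint_right]
          rintro q hq hq2
          obtain ⟨-, rfl⟩ := Finset.mem_filter.1 hq
          obtain ⟨-, hle⟩ := Finset.mem_filter.1 hq2
          rw [Fin.le_def] at hle
          omega
      by_cases hd : i.castSucc ∈ descents w
      · obtain ⟨hlt, hdesc⟩ := mem_descents.1 hd
        have hq' : (⟨((i.castSucc : Fin (m+1)):ℕ) + 1, hlt⟩ : Fin (m+1)) = i.succ := by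
          apply Fin.ext; simp
        rw [hq'] at hdesc
        have hH := H i.castSucc i.succ hadj hdesc
        rw [hmcode, if_pos hd]
        omega
      · have hasc : w i.castSucc < w i.succ := by
          have hne : w i.castSucc ≠ w i.succ := by
            intro h
            have := w.injective h
            have := congrArg Fin.val this
            omega
          rcases lt_or_gt_of_ne hne with h | h
          · exact h
          · refine absurd (mem_descents.2 ⟨by have := i.isLt; omega, ?_⟩) hd
            have hq' : (⟨((i.castSucc : Fin (m+1)):ℕ) + 1, by have := i.isLt; omega⟩ :
                Fin (m+1)) = i.succ := by
              apply Fin.ext; simp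
            rw [hq']
            exact h
        have hlis : lisFrom w i.succ + 1 ≤ lisFrom w i.castSucc := by
          obtain ⟨S, hS, hc⟩ := lisFrom_spec w i.succ
          have hnotmem : i.castSucc ∉ S := by
            intro hmem
            have := hS.2.1 _ hmem
            rw [Fin.le_def] at this
            omega
          have hchain : IsChain w i.castSucc (insert i.castSucc S) := by
            refine ⟨Finset.mem_insert_self _ _, ?_, ?_⟩
            · intro q hq
              rcases Finset.mem_insert.1 hq with rfl | hq
              · exact le_refl _
              · refine le_trans ?_ (hS.2.1 q hq)
                rw [Fin.le_def]; omega
            · intro p hp q hq hpq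
              rcases Finset.mem_insert.1 hp with hpc | hp
              · rw [hpc]
                rcases Finset.mem_insert.1 hq with hqc | hq
                · rw [hpc, hqc] at hpq; exact absurd hpq (lt_irrefl _)
                · rcases eq_or_lt_of_le (hS.2.1 q hq) with rfl | h
                  · exact hasc
                  · exact lt_trans hasc (hS.2.2 _ hS.1 q hq h)
              · rcases Finset.mem_insert.1 hq with hqc | hq
                · rw [hqc] at hpq
                  have := hS.2.1 p hp
                  rw [Fin.le_def] at this
                  rw [Fin.lt_def] at hpq
                  omega
                · exact hS.2.2 p hp q hq hpq
          have := le_lisFrom hchain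
          rw [Finset.card_insert_of_notMem hnotmem, hc] at this
          omega
        rw [hmcode, if_neg hd]
        omega

end MajAux

section MainAux
open Finset Equiv

lemma sum_lis_reindex (w : Equiv.Perm (Fin n)) (e : Equiv.Perm (Fin n)) :
    ∑ i, lisFrom w (e i) = ∑ i, lisFrom w i :=
  Equiv.sum_comp e (lisFrom w)

lemma raj_le_mul_swap_asc {j j' : Fin n} (hadj : (j:ℕ) + 1 = (j':ℕ))
    {v : Equiv.Perm (Fin n)} (h : v j < v j') :
    raj v ≤ raj (v * Equiv.swap j j') := by
  apply raj_le_raj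
  calc ∑ i, lisFrom (v * Equiv.swap j j') i
      ≤ ∑ i, lisFrom v (Equiv.swap j j' i) :=
        Finset.sum_le_sum fun i _ => lis_swapA hadj h i
    _ = ∑ i, lisFrom v i := sum_lis_reindex v (Equiv.swap j j')

lemma raj_le_mul_swap_good {j j' : Fin n} (hadj : (j:ℕ) + 1 = (j':ℕ))
    {w : Equiv.Perm (Fin n)} (hdesc : w j' < w j)
    (hlis : lisFrom w j + 1 ≤ lisFrom w j') :
    raj w ≤ raj (w * Equiv.swap j j') := by
  apply raj_le_raj
  calc ∑ i, lisFrom (w * Equiv.swap j j') i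
      ≤ ∑ i, lisFrom w (Equiv.swap j j' i) :=
        Finset.sum_le_sum fun i _ => lis_swapB hadj hdesc hlis i
    _ = ∑ i, lisFrom w i := sum_lis_reindex w (Equiv.swap j j')

lemma raj_mono : ∀ (N : ℕ) (u v : Equiv.Perm (Fin n)), invNum u ≤ N →
    invNum (v * u) = invNum v + invNum u → raj v ≤ raj (v * u) := by
  intro N
  induction N with
  | zero =>
    intro u v hN hadd
    rcases eq_or_ne u 1 with rfl | hu
    · rw [mul_one]
    · exact absurd (invNum_pos_of_ne_one hu) (by omega)
  | succ N ih =>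
    intro u v hN hadd
    rcases eq_or_ne u 1 with rfl | hu
    · rw [mul_one]
    obtain ⟨j, j', hadj, hdesc⟩ := exists_left_descent hu
    have hu' : invNum u = invNum (Equiv.swap j j' * u) + 1 := invNum_swap_mul_desc hadj hdesc
    have hw : v * u = (v * Equiv.swap j j') * (Equiv.swap j j' * u) := by
      rw [mul_assoc, ← mul_assoc (Equiv.swap j j'), Equiv.swap_mul_self, one_mul]
    have hsub := invNum_mul_le (v * Equiv.swap j j') (Equiv.swap j j' * u)
    rw [← hw] at hsub
    have hlt : v j < v j' := by
      by_contra hge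
      have hne : v j ≠ v j' := fun h => absurd (congrArg Fin.val (v.injective h)) (by omega)
      have hgt : v j' < v j := lt_of_le_of_ne (not_lt.1 hge) (Ne.symm hne)
      have h1 := invNum_mul_swap_desc hadj hgt
      omega
    have hvs := invNum_mul_swap_asc hadj hlt
    have hadd' : invNum ((v * Equiv.swap j j') * (Equiv.swap j j' * u)) =
        invNum (v * Equiv.swap j j') + invNum (Equiv.swap j j' * u) := by
      rw [← hw]; omega
    have h3 : raj v ≤ raj (v * Equiv.swap j j') := raj_le_mul_swap_asc hadj hlt
    have h4 : raj (v * Equiv.swap j j') ≤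
        raj ((v * Equiv.swap j j') * (Equiv.swap j j' * u)) :=
      ih (Equiv.swap j j' * u) (v * Equiv.swap j j') (by omega) hadd'
    rw [hw]
    exact le_trans h3 h4

lemma maj_le_raj_of_leR {v w : Equiv.Perm (Fin n)} (h : leR v w) : maj v ≤ raj w := by
  obtain ⟨u, rfl, hadd⟩ := h
  exact le_trans (maj_le_raj v) (raj_mono (invNum u) u v le_rfl hadd)

lemma exists_max : ∀ (N : ℕ) (w : Equiv.Perm (Fin n)), invNum w ≤ N →
    ∃ v, leR v w ∧ raj w ≤ maj v := by
  intro N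
  induction N with
  | zero =>
    intro w hN
    by_cases hgood : ∃ j j' : Fin n, ((j:ℕ) + 1 = (j':ℕ)) ∧ w j' < w j ∧
        lisFrom w j + 1 ≤ lisFrom w j'
    · obtain ⟨j, j', hadj, hdesc, -⟩ := hgood
      have := invNum_mul_swap_desc hadj hdesc
      omega
    · push_neg at hgood
      refine ⟨w, leR_refl w, ?_⟩
      rw [maj_eq_sum, raj]
      refine Finset.sum_le_sum fun i _ => ?_
      have h1 := nogood_key (fun j j' ha hd => by
        have := hgood j j' ha hd; omega) i
      have h2 := rajCode_add w i
      omega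
  | succ N ih =>
    intro w hN
    by_cases hgood : ∃ j j' : Fin n, ((j:ℕ) + 1 = (j':ℕ)) ∧ w j' < w j ∧
        lisFrom w j + 1 ≤ lisFrom w j'
    · obtain ⟨j, j', hadj, hdesc, hlis⟩ := hgood
      have h1 : invNum w = invNum (w * Equiv.swap j j') + 1 := invNum_mul_swap_desc hadj hdesc
      have h2 : raj w ≤ raj (w * Equiv.swap j j') := raj_le_mul_swap_good hadj hdesc hlis
      obtain ⟨v, hle, hraj⟩ := ih (w * Equiv.swap j j') (by omega)
      have hle2 : leR (w * Equiv.swap j j') w := by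
        refine ⟨Equiv.swap j j', ?_, ?_⟩
        · rw [mul_assoc, Equiv.swap_mul_self, mul_one]
        · rw [invNum_swap hadj]; omega
      exact ⟨v, leR_trans hle hle2, le_trans h2 hraj⟩
    · push_neg at hgood
      refine ⟨w, leR_refl w, ?_⟩
      rw [maj_eq_sum, raj]
      refine Finset.sum_le_sum fun i _ => ?_
      have h1 := nogood_key (fun j j' ha hd => by
        have := hgood j j' ha hd; omega) i
      have h2 := rajCode_add w i
      omega

lemma lisFrom_le_inv (w : Equiv.Perm (Fin n)) (i : Fin n) :
    lisFrom w i ≤ lisFrom w⁻¹ (w i) := by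
  obtain ⟨S, hS, hc⟩ := lisFrom_spec w i
  rw [← hc]
  have hchain : IsChain w⁻¹ (w i) (S.image w) := by
    refine ⟨Finset.mem_image_of_mem _ hS.1, ?_, ?_⟩
    · rintro b hb
      obtain ⟨p, hp, rfl⟩ := Finset.mem_image.1 hb
      rcases eq_or_lt_of_le (hS.2.1 p hp) with rfl | h
      · exact le_refl _
      · exact le_of_lt (hS.2.2 i hS.1 p hp h)
    · rintro b hb c hc hbc
      obtain ⟨p, hp, rfl⟩ := Finset.mem_image.1 hb
      obtain ⟨q, hq, rfl⟩ := Finset.mem_image.1 hc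
      rw [Equiv.Perm.coe_inv, Equiv.symm_apply_apply, Equiv.symm_apply_apply]
      have hpq : p ≠ q := fun h => absurd (h ▸ hbc) (lt_irrefl _)
      rcases lt_or_gt_of_ne hpq with h | h
      · exact h
      · exact absurd (hS.2.2 q hq p hp h) (lt_asymm hbc)
  have := le_lisFrom hchain
  rwa [Finset.card_image_of_injective _ w.injective] at this

lemma lisFrom_inv_eq (w : Equiv.Perm (Fin n)) (i : Fin n) :
    lisFrom w⁻¹ (w i) = lisFrom w i := by
  refine le_antisymm ?_ (lisFrom_le_inv w i)
  have := lisFrom_le_inv w⁻¹ (w i)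
  rwa [inv_inv, Equiv.Perm.coe_inv, Equiv.symm_apply_apply] at this

lemma raj_inv (w : Equiv.Perm (Fin n)) : raj w⁻¹ = raj w := by
  have h1 := raj_add w
  have h2 := raj_add w⁻¹
  have h3 : ∑ a, lisFrom w⁻¹ a = ∑ i, lisFrom w i := by
    rw [← Equiv.sum_comp w (lisFrom w⁻¹)]
    exact Finset.sum_congr rfl fun i _ => lisFrom_inv_eq w i
  omega

lemma leL_iff_leR_inv {u w : Equiv.Perm (Fin n)} : leL u w ↔ leR u⁻¹ w⁻¹ := by
  constructor
  · rintro ⟨v, rfl, hadd⟩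
    refine ⟨v⁻¹, by rw [mul_inv_rev], ?_⟩
    rw [invNum_inv, invNum_inv, invNum_inv, hadd]
    omega
  · rintro ⟨x, hx, hadd⟩
    refine ⟨x⁻¹, ?_, ?_⟩
    · have : w⁻¹⁻¹ = (u⁻¹ * x)⁻¹ := by rw [← hx]
      rw [inv_inv, mul_inv_rev, inv_inv] at this
      exact this
    · have h2 : invNum w = invNum u⁻¹ + invNum x := by rw [← invNum_inv w, hadd]
      rw [h2, invNum_inv u, invNum_inv x]
      omega

end MainAux

/-- `raj(w) = max{ maj(v) : v ≤_R w } = max{ maj(u⁻¹) : u ≤_L w }`. -/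
theorem raj_eq_max_maj (n : ℕ) (w : Equiv.Perm (Fin n)) :
    ((∃ v : Equiv.Perm (Fin n), leR v w ∧ maj v = raj w) ∧
      ∀ v : Equiv.Perm (Fin n), leR v w → maj v ≤ raj w) ∧
    ((∃ u : Equiv.Perm (Fin n), leL u w ∧ maj u⁻¹ = raj w) ∧
      ∀ u : Equiv.Perm (Fin n), leL u w → maj u⁻¹ ≤ raj w) := by
  constructor
  · constructor
    · obtain ⟨v, hle, hr⟩ := exists_max (invNum w) w le_rfl
      exact ⟨v, hle, le_antisymm (maj_le_raj_of_leR hle) hr⟩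
    · exact fun v hv => maj_le_raj_of_leR hv
  · constructor
    · obtain ⟨v, hle, hr⟩ := exists_max (invNum w⁻¹) w⁻¹ le_rfl
      refine ⟨v⁻¹, leL_iff_leR_inv.2 (by rwa [inv_inv]), ?_⟩
      rw [inv_inv]
      refine le_antisymm (by rw [← raj_inv w]; exact maj_le_raj_of_leR hle)
        (by rw [← raj_inv w]; exact hr)
    · intro u hu
      have := maj_le_raj_of_leR (leL_iff_leR_inv.1 hu)
      rwa [raj_inv w] at this

end RajRegularity
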